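/- For probability distributions ρ, σ, τ on a finite set, −log₂ F²(ρ,σ) ≤ D(τ‖ρ) + D(τ‖σ), where F(ρ,σ) = ∑_x √(ρ(x)σ(x)) is the (classical) fidelity and D denotes base-2 relative entropy. -/

import Mathlib

open Finset Real

lemma gibbs_aux {X : Type*} [Fintype X] (t q : X → ℝ) (s : Finset X)
    (ht0 : ∀ x ∈ s, 0 < t x) (hq : ∀ x ∈ s, 0 < q x)
    (hts : ∑ x ∈ s, t x = 1) :
    ∑ x ∈ s, t x * Real.log (q x / t x) ≤ Real.log (∑ x ∈ s, q x) := by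
  set c := ∑ x ∈ s, q x with hc
  have hs : s.Nonempty := by
    by_contra h
    rw [Finset.not_nonempty_iff_eq_empty] at h
    simp [h] at hts
  have hcpos : 0 < c := Finset.sum_pos hq hs
  have key : ∑ x ∈ s, t x * Real.log (q x / (t x * c)) ≤ 0 := by
    have h1 : ∑ x ∈ s, t x * Real.log (q x / (t x * c))
        ≤ ∑ x ∈ s, t x * (q x / (t x * c) - 1) := by
      apply Finset.sum_le_sum
      intro x hx
      have := Real.log_le_sub_one_of_pos (show 0 < q x / (t x * c) from
        div_pos (hq x hx) (mul_pos (ht0 x hx) hcpos))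
      exact mul_le_mul_of_nonneg_left this (le_of_lt (ht0 x hx))
    have h2 : ∑ x ∈ s, t x * (q x / (t x * c) - 1) = 0 := by
      have : ∀ x ∈ s, t x * (q x / (t x * c) - 1) = q x / c - t x := by
        intro x hx
        have h1 := ne_of_gt (ht0 x hx)
        have h2 := ne_of_gt hcpos
        field_simp
      rw [Finset.sum_congr rfl this, Finset.sum_sub_distrib, ← Finset.sum_div, ← hc,
        div_self (ne_of_gt hcpos), hts, sub_self]
    linarith
  have expand : ∀ x ∈ s, t x * Real.log (q x / (t x * c))
      = t x * Real.log (q x / t x) - t x * Real.log c := by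
    intro x hx
    rw [show q x / (t x * c) = (q x / t x) / c by ring,
      Real.log_div (div_ne_zero (ne_of_gt (hq x hx)) (ne_of_gt (ht0 x hx))) (ne_of_gt hcpos)]
    ring
  rw [Finset.sum_congr rfl expand, Finset.sum_sub_distrib, ← Finset.sum_mul, hts, one_mul] at key
  linarith

/-- `p` is a probability distribution on the finite set `X`. -/
def IsProb {X : Type*} [Fintype X] (p : X → ℝ) : Prop :=
  (∀ x, 0 ≤ p x) ∧ ∑ x, p x = 1

/-- Base-2 relative entropy with values in `EReal`, equal to `+∞` when `t` is not absolutely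
continuous with respect to `p`. -/
noncomputable def DklE {X : Type*} [Fintype X] (t p : X → ℝ) : EReal :=
  if ∀ x, p x = 0 → t x = 0 then ((∑ x, t x * Real.logb 2 (t x / p x) : ℝ) : EReal) else ⊤

/-- For probability distributions `ρ, σ, τ` on a finite set:
`-log₂ F²(ρ,σ) ≤ D(τ‖ρ) + D(τ‖σ)`, where `F(ρ,σ) = ∑ₓ √(ρ(x)σ(x))`. -/
theorem fidelity_vs_relative_entropy {X : Type*} [Fintype X] (ρ σ τ : X → ℝ)
    (hρ : IsProb ρ) (hσ : IsProb σ) (hτ : IsProb τ) :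
    ((-Real.logb 2 ((∑ x, Real.sqrt (ρ x * σ x)) ^ 2) : ℝ) : EReal) ≤
      DklE τ ρ + DklE τ σ := by
  by_cases hρc : ∀ x, ρ x = 0 → τ x = 0
  swap
  · rw [DklE, if_neg hρc]
    have hb : DklE τ σ ≠ ⊥ := by unfold DklE; split <;> simp
    rw [EReal.top_add_of_ne_bot hb]
    exact le_top
  by_cases hσc : ∀ x, σ x = 0 → τ x = 0
  swap
  · rw [show DklE τ σ = ⊤ from by rw [DklE, if_neg hσc]]
    have hb : DklE τ ρ ≠ ⊥ := by unfold DklE; split <;> simp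
    rw [EReal.add_top_of_ne_bot hb]
    exact le_top
  rw [DklE, if_pos hρc, DklE, if_pos hσc, ← EReal.coe_add, EReal.coe_le_coe_iff]
  -- now a real inequality
  set s : Finset X := Finset.univ.filter (fun x => τ x ≠ 0) with hs
  have hτpos : ∀ x ∈ s, 0 < τ x := fun x hx => by
    rcases (hτ.1 x).lt_or_eq with h | h
    · exact h
    · exact absurd h.symm (by simpa [hs] using hx)
  have hρpos : ∀ x ∈ s, 0 < ρ x := fun x hx => by
    rcases (hρ.1 x).lt_or_eq with h | h
    · exact h
    · exact absurd (hρc x h.symm) (by simpa [hs] using hx)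
  have hσpos : ∀ x ∈ s, 0 < σ x := fun x hx => by
    rcases (hσ.1 x).lt_or_eq with h | h
    · exact h
    · exact absurd (hσc x h.symm) (by simpa [hs] using hx)
  set q : X → ℝ := fun x => Real.sqrt (ρ x * σ x) with hqdef
  have hqpos : ∀ x ∈ s, 0 < q x := fun x hx =>
    Real.sqrt_pos.mpr (mul_pos (hρpos x hx) (hσpos x hx))
  have hts : ∑ x ∈ s, τ x = 1 := by
    rw [← hτ.2]
    apply Finset.sum_subset (Finset.filter_subset _ _)
    intro x _ hx
    by_contra h
    exact hx (by simp [hs, h])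
  -- restrict both entropy sums to s
  have hrestr : ∀ p : X → ℝ, ∑ x, τ x * Real.logb 2 (τ x / p x)
      = ∑ x ∈ s, τ x * Real.logb 2 (τ x / p x) := by
    intro p
    symm
    apply Finset.sum_subset (Finset.filter_subset _ _)
    intro x _ hx
    have : τ x = 0 := by by_contra h; exact hx (by simp [hs, h])
    simp [this]
  rw [hrestr ρ, hrestr σ]
  -- pass from logb to log
  have hlog2 : (0:ℝ) < Real.log 2 := Real.log_pos (by norm_num)
  simp only [Real.logb, mul_div_assoc', ← Finset.sum_div, neg_div']
  rw [← add_div, div_le_div_iff_of_pos_right hlog2]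
  -- key: gibbs
  have hF : ∑ x ∈ s, q x ≤ ∑ x, q x := by
    apply Finset.sum_le_sum_of_subset_of_nonneg (Finset.filter_subset _ _)
    intro x _ _
    exact Real.sqrt_nonneg _
  have hsne : s.Nonempty := by
    by_contra h
    rw [Finset.not_nonempty_iff_eq_empty] at h
    simp [h] at hts
  have hcpos : 0 < ∑ x ∈ s, q x := Finset.sum_pos hqpos hsne
  have hFpos : 0 < ∑ x, q x := lt_of_lt_of_le hcpos hF
  have gibbs := gibbs_aux τ q s hτpos hqpos hts
  have hlogF : Real.log (∑ x ∈ s, q x) ≤ Real.log (∑ x, q x) :=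
    Real.log_le_log hcpos hF
  -- combine pointwise: τ log(τ/ρ) + τ log(τ/σ) = -2 τ log(q/τ)
  have hpoint : ∀ x ∈ s, τ x * Real.log (τ x / ρ x) + τ x * Real.log (τ x / σ x)
      = -(2 * (τ x * Real.log (q x / τ x))) := by
    intro x hx
    have hτx := ne_of_gt (hτpos x hx)
    have hρx := ne_of_gt (hρpos x hx)
    have hσx := ne_of_gt (hσpos x hx)
    have hqx := ne_of_gt (hqpos x hx)
    rw [Real.log_div hτx hρx, Real.log_div hτx hσx, Real.log_div hqx hτx,
      hqdef, Real.log_sqrt (mul_nonneg (hρ.1 x) (hσ.1 x)), Real.log_mul hρx hσx]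
    ring
  have hsum : ∑ x ∈ s, τ x * Real.log (τ x / ρ x) + ∑ x ∈ s, τ x * Real.log (τ x / σ x)
      = -(2 * ∑ x ∈ s, τ x * Real.log (q x / τ x)) := by
    rw [← Finset.sum_add_distrib, Finset.sum_congr rfl hpoint]
    rw [Finset.mul_sum]
    exact Finset.sum_neg_distrib _
  rw [hsum]
  have hlogsq : Real.log ((∑ x, q x) ^ 2) = 2 * Real.log (∑ x, q x) := by
    rw [Real.log_pow]; push_cast; ring
  rw [hlogsq]
  nlinarith [gibbs.trans hlogF]
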